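/- Let q = exp(2πi P/Q) with Q odd, gcd(P,Q)=1, and λ, a, b ∈ ℂ with λ ≠ 0. On ℂ^Q with basis v_0,...,v_{Q-1}, define Z v_j = λ q^{2j} v_j; X v_j = -i q^{j-1}(ab - [j]_q (λ q^{j-1} - λ^{-1} q^{-j+1})/(q - q^{-1})) v_{j-1} for j ≠ 0, X v_0 = -i q^{-1} a v_{Q-1}; Y v_j = -i λ q^{j+1} v_{j+1} for j ≠ Q-1, Y v_{Q-1} = -i λ b v_0. Then ZX = q^{-2} XZ and ZY = q^2 YZ. -/

import Mathlib

/-- The second (cyclic) family of representations satisfies `ZX = q⁻²XZ` and `ZY = q²YZ`. -/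
theorem stmt_12 (P Q : ℕ) (hQpos : 0 < Q) (hQodd : Odd Q) (hcop : Nat.Coprime P Q)
    (q : ℂ) (hq : q = Complex.exp (2 * Real.pi * Complex.I * P / Q))
    (l a b : ℂ) (hl : l ≠ 0)
    (Z X Y : Matrix (Fin Q) (Fin Q) ℂ)
    (hZ : ∀ i j, Z i j = if i = j then l * q ^ (2 * (j : ℤ)) else 0)
    (hX : ∀ i j, X i j =
      if (j : ℕ) ≠ 0 ∧ (i : ℕ) + 1 = (j : ℕ) then
        -Complex.I * q ^ ((j : ℤ) - 1)
          * (a * b - ((q ^ (j : ℤ) - q ^ (-(j : ℤ))) / (q - q⁻¹))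
              * ((l * q ^ ((j : ℤ) - 1) - l⁻¹ * q ^ (-(j : ℤ) + 1)) / (q - q⁻¹)))
      else if (j : ℕ) = 0 ∧ (i : ℕ) = Q - 1 then -Complex.I * q⁻¹ * a
      else 0)
    (hY : ∀ i j, Y i j =
      if (j : ℕ) ≠ Q - 1 ∧ (i : ℕ) = (j : ℕ) + 1 then -Complex.I * l * q ^ ((j : ℤ) + 1)
      else if (j : ℕ) = Q - 1 ∧ (i : ℕ) = 0 then -Complex.I * l * b
      else 0) :
    Z * X = (q ^ (-2 : ℤ)) • (X * Z) ∧ Z * Y = (q ^ (2 : ℤ)) • (Y * Z) := by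
  have hq0 : q ≠ 0 := by rw [hq]; exact Complex.exp_ne_zero _
  have hQ0 : (Q : ℂ) ≠ 0 := Nat.cast_ne_zero.mpr hQpos.ne'
  have hqQ : q ^ (Q : ℤ) = 1 := by
    rw [hq, ← Complex.exp_int_mul]
    have : (Q : ℤ) * (2 * ↑Real.pi * Complex.I * ↑P / ↑Q) = (P : ℂ) * (2 * ↑Real.pi * Complex.I) := by
      push_cast; field_simp
    rw [this]
    simpa using Complex.exp_int_mul_two_pi_mul_I P
  have hq2Q : q ^ (2 * (Q : ℤ)) = 1 := by
    rw [mul_comm, zpow_mul, hqQ]; norm_num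
  have hZd : Z = Matrix.diagonal (fun j : Fin Q => l * q ^ (2 * (j : ℤ))) := by
    ext i j
    rw [hZ, Matrix.diagonal_apply]
    by_cases h : i = j <;> simp [h]
  constructor
  · ext i j
    rw [hZd, Matrix.diagonal_mul, Matrix.smul_apply, Matrix.mul_diagonal, hX]
    split_ifs with h1 h2
    · have hij : (i : ℤ) = (j : ℤ) - 1 := by
        have := h1.2; omega
      rw [hij]
      have : q ^ (2 * ((j : ℤ) - 1)) = q ^ (-2 : ℤ) * q ^ (2 * (j : ℤ)) := by
        rw [← zpow_add₀ hq0]; ring_nf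
      rw [this, smul_eq_mul]; ring
    · have hi : (i : ℤ) = (Q : ℤ) - 1 := by
        have := h2.2; omega
      have hj : (j : ℤ) = 0 := by exact_mod_cast h2.1
      rw [hi, hj]
      have : q ^ (2 * ((Q : ℤ) - 1)) = q ^ (-2 : ℤ) * q ^ (2 * (0 : ℤ)) := by
        have h : (2 : ℤ) * ((Q : ℤ) - 1) = 2 * (Q : ℤ) + (-2) := by ring
        rw [h, zpow_add₀ hq0, hq2Q]; simp
      rw [this, smul_eq_mul]; ring
    · simp
  · ext i j
    rw [hZd, Matrix.diagonal_mul, Matrix.smul_apply, Matrix.mul_diagonal, hY]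
    split_ifs with h1 h2
    · have hij : (i : ℤ) = (j : ℤ) + 1 := by
        have := h1.2; omega
      rw [hij]
      have : q ^ (2 * ((j : ℤ) + 1)) = q ^ (2 : ℤ) * q ^ (2 * (j : ℤ)) := by
        rw [← zpow_add₀ hq0]; ring_nf
      rw [this, smul_eq_mul]; ring
    · have hi : (i : ℤ) = 0 := by exact_mod_cast h2.2
      have hj : (j : ℤ) = (Q : ℤ) - 1 := by
        have := h2.1; omega
      rw [hi, hj]
      have : q ^ (2 * (0 : ℤ)) = q ^ (2 : ℤ) * q ^ (2 * ((Q : ℤ) - 1)) := by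
        rw [← zpow_add₀ hq0]
        have h : (2 : ℤ) + 2 * ((Q : ℤ) - 1) = 2 * (Q : ℤ) + 0 := by ring
        rw [h, zpow_add₀ hq0, hq2Q]; simp
      rw [this, smul_eq_mul]; ring
    · simp
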